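/- Let x, y : [0,∞) → [0,∞) be measurable with x differentiable, φ : [0,∞) → [0,∞) bounded with φ(t) → 0 as t → ∞, and suppose x'(t) + y(t) ≤ φ(t)(x(t) + 1), x(t) ≤ C y(t), and x(0) ≤ C for some C > 0. Then for every a > 0, lim_{t→∞} ∫_t^{t+a} y(s) ds = 0. -/

import Mathlib

open MeasureTheory Filter Topology

private lemma le_of_deriv_nonpos' {f f' : ℝ → ℝ} {A B : ℝ} (hAB : A ≤ B)
    (hderiv : ∀ t ∈ Set.Icc A B, HasDerivAt f (f' t) t)
    (hle : ∀ t ∈ Set.Ioo A B, f' t ≤ 0) : f B ≤ f A := by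
  have key := intervalIntegral.sub_le_integral_of_hasDeriv_right_of_le (g := f) (g' := f')
    (φ := fun _ => (0:ℝ)) hAB
    (fun t ht => (hderiv t ht).continuousAt.continuousWithinAt)
    (fun t ht => (hderiv t ⟨ht.1.le, ht.2.le⟩).hasDerivWithinAt)
    (by simp)
    hle
  simpa using key

private lemma exp_shift {x x' : ℝ → ℝ} {k c A B : ℝ} (hAB : A ≤ B)
    (hderiv : ∀ t ∈ Set.Icc A B, HasDerivAt x (x' t) t)
    (hle : ∀ t ∈ Set.Ioo A B, x' t + k * (x t + c) ≤ 0) :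
    x B + c ≤ Real.exp (k * A - k * B) * (x A + c) := by
  have hf : ∀ t ∈ Set.Icc A B, HasDerivAt (fun s => Real.exp (k*s) * (x s + c))
      (Real.exp (k*t) * (x' t + k * (x t + c))) t := by
    intro t ht
    have h1 : HasDerivAt (fun s : ℝ => k * s) k t := by simpa using (hasDerivAt_id t).const_mul k
    have h2 : HasDerivAt (fun s => Real.exp (k*s)) (Real.exp (k*t) * k) t := h1.exp
    have h3 : HasDerivAt (fun s => x s + c) (x' t) t := (hderiv t ht).add_const c
    have := h2.mul h3
    refine this.congr_deriv ?_
    ring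
  have hmono : Real.exp (k*B) * (x B + c) ≤ Real.exp (k*A) * (x A + c) :=
    le_of_deriv_nonpos' hAB hf (fun t ht =>
      mul_nonpos_iff.2 (Or.inl ⟨(Real.exp_pos _).le, hle t ht⟩))
  calc x B + c = Real.exp (-(k*B)) * (Real.exp (k*B) * (x B + c)) := by
        rw [← mul_assoc, ← Real.exp_add]; simp
    _ ≤ Real.exp (-(k*B)) * (Real.exp (k*A) * (x A + c)) :=
        mul_le_mul_of_nonneg_left hmono (Real.exp_pos _).le
    _ = Real.exp (k*A - k*B) * (x A + c) := by
        rw [← mul_assoc, ← Real.exp_add, show -(k*B) + k*A = k*A - k*B from by ring]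

/-- Lemma A.2 (second part): under the same hypotheses, for every `a > 0` the sliding-window
integrals `∫_t^{t+a} y` tend to `0` as `t → ∞`. -/
theorem stmt4 (x x' y φ : ℝ → ℝ) (C : ℝ) (hC : 0 < C)
    (hxnonneg : ∀ t, 0 ≤ t → 0 ≤ x t)
    (hynonneg : ∀ t, 0 ≤ t → 0 ≤ y t)
    (hymeas : Measurable y)
    (hyloc : LocallyIntegrableOn y (Set.Ici 0))
    (hφnonneg : ∀ t, 0 ≤ t → 0 ≤ φ t)
    (hφbdd : ∀ t, 0 ≤ t → φ t ≤ C)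
    (hφlim : Tendsto φ atTop (𝓝 0))
    (hderiv : ∀ t, 0 ≤ t → HasDerivAt x (x' t) t)
    (hineq : ∀ t, 0 ≤ t → x' t + y t ≤ φ t * (x t + 1))
    (hcomp : ∀ t, 0 ≤ t → x t ≤ C * y t)
    (hx0 : x 0 ≤ C) :
    ∀ a : ℝ, 0 < a →
      Tendsto (fun t => ∫ s in t..(t + a), y s) atTop (𝓝 0) := by
  -- basic derivative inequality
  have hx' : ∀ t, 0 ≤ t → x' t ≤ φ t * (x t + 1) - y t := fun t ht => by
    linarith [hineq t ht]
  -- y ≥ x / C, in the form (1/C) * x ≤ y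
  have hy' : ∀ t, 0 ≤ t → C⁻¹ * x t ≤ y t := by
    intro t ht
    have h := mul_le_mul_of_nonneg_left (hcomp t ht) (inv_nonneg.2 hC.le)
    calc C⁻¹ * x t ≤ C⁻¹ * (C * y t) := h
      _ = y t := by field_simp
  -- choose T₀ past which φ ≤ 1/(2C)
  obtain ⟨T₀', hT₀'⟩ := Metric.tendsto_atTop.1 hφlim (1/(2*C)) (by positivity)
  set T₀ : ℝ := max T₀' 0 with hT₀def
  have hT₀0 : (0:ℝ) ≤ T₀ := le_max_right _ _
  have hφsmall : ∀ t, T₀ ≤ t → φ t ≤ 1/(2*C) := by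
    intro t ht
    have := hT₀' t (le_trans (le_max_left _ _) ht)
    rw [Real.dist_eq, sub_zero] at this
    exact (le_abs_self _).trans this.le
  -- Step A : exponential a priori bound
  have hA : ∀ t, 0 ≤ t → x t + 1 ≤ Real.exp (C * t) * (x 0 + 1) := by
    intro t ht
    have := exp_shift (k := -C) (c := 1) ht
      (fun s hs => hderiv s hs.1)
      ?_
    · simpa using this
    · intro s hs
      have hs0 : 0 ≤ s := hs.1.le
      have h1 := hx' s hs0
      have h2 : φ s * (x s + 1) ≤ C * (x s + 1) :=
        mul_le_mul_of_nonneg_right (hφbdd s hs0) (by linarith [hxnonneg s hs0])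
      have h3 := hynonneg s hs0
      linarith
  -- global bound M
  set M : ℝ := (C + 1) * Real.exp (C * T₀) with hMdef
  have hexpT₀ : (1:ℝ) ≤ Real.exp (C * T₀) := Real.one_le_exp (by positivity)
  have hM1 : (1:ℝ) ≤ M := by nlinarith
  have hMIcc : ∀ t, 0 ≤ t → t ≤ T₀ → x t ≤ M - 1 := by
    intro t ht htT
    have h1 := hA t ht
    have h2 : Real.exp (C * t) ≤ Real.exp (C * T₀) :=
      Real.exp_le_exp.2 (mul_le_mul_of_nonneg_left htT hC.le)
    have h3 := Real.exp_pos (C * t)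
    nlinarith
  have hM : ∀ t, 0 ≤ t → x t ≤ M := by
    intro t ht
    rcases le_total t T₀ with h | h
    · linarith [hMIcc t ht h]
    · -- use Step B on [T₀, t]
      have h2C : (0:ℝ) < 2 * C := by positivity
      have hB := exp_shift (k := 1/(2*C)) (c := -1) h
        (fun s hs => hderiv s (hT₀0.trans hs.1)) ?_
      · have hxT₀ : x T₀ ≤ M - 1 := hMIcc T₀ hT₀0 le_rfl
        have hexple : Real.exp (1/(2*C) * T₀ - 1/(2*C) * t) ≤ 1 := by
          rw [Real.exp_le_one_iff]
          have h0 : 1/(2*C) * T₀ ≤ 1/(2*C) * t := mul_le_mul_of_nonneg_left h (by positivity)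
          linarith
        have hexppos := Real.exp_pos (1/(2*C) * T₀ - 1/(2*C) * t)
        rcases le_total (x T₀) 1 with hc | hc
        · have : Real.exp (1/(2*C) * T₀ - 1/(2*C) * t) * (x T₀ + -1) ≤ 0 :=
            mul_nonpos_iff.2 (Or.inl ⟨hexppos.le, by linarith⟩)
          linarith [hB]
        · have : Real.exp (1/(2*C) * T₀ - 1/(2*C) * t) * (x T₀ + -1) ≤ x T₀ + -1 := by
            nlinarith
          linarith [hB]
      · intro s hs
        have hs0 : 0 ≤ s := hT₀0.trans hs.1.le
        have h1 := hx' s hs0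
        have h2 : φ s * (x s + 1) ≤ 1/(2*C) * (x s + 1) :=
          mul_le_mul_of_nonneg_right (hφsmall s hs.1.le) (by linarith [hxnonneg s hs0])
        have h3 := hy' s hs0
        have hinv : 1/(2*C) * 2 = C⁻¹ := by field_simp
        nlinarith [hxnonneg s hs0]
  have hMpos : (0:ℝ) < M + 1 := by linarith
  -- Step C : x t → 0
  have hxsmall : ∀ ε : ℝ, 0 < ε → ∀ᶠ t in atTop, x t < ε := by
    intro ε hε
    set δ : ℝ := ε / (2 * C) with hδdef
    have hδpos : 0 < δ := by positivity
    obtain ⟨T', hT'⟩ := Metric.tendsto_atTop.1 hφlim (δ / (M + 1)) (by positivity)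
    set T₁ : ℝ := max T' 0 with hT₁def
    have hT₁0 : (0:ℝ) ≤ T₁ := le_max_right _ _
    have hφδ : ∀ t, T₁ ≤ t → φ t ≤ δ / (M + 1) := by
      intro t ht
      have := hT' t (le_trans (le_max_left _ _) ht)
      rw [Real.dist_eq, sub_zero] at this
      exact (le_abs_self _).trans this.le
    have hbound : ∀ t, T₁ ≤ t →
        x t ≤ δ * C + Real.exp (C⁻¹ * T₁ - C⁻¹ * t) * M := by
      intro t ht
      have hkey := exp_shift (k := C⁻¹) (c := -(δ * C)) ht
        (fun s hs => hderiv s (hT₁0.trans hs.1)) ?_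
      · have hexppos := Real.exp_pos (C⁻¹ * T₁ - C⁻¹ * t)
        have hxT₁ : x T₁ ≤ M := hM T₁ hT₁0
        have : Real.exp (C⁻¹ * T₁ - C⁻¹ * t) * (x T₁ + -(δ * C)) ≤
            Real.exp (C⁻¹ * T₁ - C⁻¹ * t) * M := by
          apply mul_le_mul_of_nonneg_left _ hexppos.le
          nlinarith
        linarith [hkey]
      · intro s hs
        have hs0 : 0 ≤ s := hT₁0.trans hs.1.le
        have h1 := hx' s hs0
        have h2 : φ s * (x s + 1) ≤ δ := by
          have hb := hφδ s hs.1.le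
          have hx1 : x s + 1 ≤ M + 1 := by linarith [hM s hs0]
          calc φ s * (x s + 1) ≤ (δ / (M + 1)) * (M + 1) :=
                mul_le_mul hb hx1 (by linarith [hxnonneg s hs0]) (by positivity)
            _ = δ := by field_simp
        have h3 := hy' s hs0
        have hinv : C⁻¹ * (δ * C) = δ := by field_simp
        nlinarith
    have htend : Tendsto (fun t => δ * C + Real.exp (C⁻¹ * T₁ - C⁻¹ * t) * M)
        atTop (𝓝 (δ * C + 0 * M)) := by
      apply Tendsto.const_add
      apply Tendsto.mul_const
      apply Real.tendsto_exp_atBot.comp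
      have h1 : Tendsto (fun t : ℝ => C⁻¹ * t) atTop atTop :=
        Tendsto.const_mul_atTop (by positivity) tendsto_id
      have h2 : Tendsto (fun t : ℝ => -(C⁻¹ * t)) atTop atBot := tendsto_neg_atBot_iff.2 h1
      have := tendsto_atBot_add_const_left atTop (C⁻¹ * T₁) h2
      simpa [sub_eq_add_neg] using this
    have hδC : δ * C = ε / 2 := by rw [hδdef]; field_simp
    have hlt : δ * C + 0 * M < ε := by rw [hδC]; linarith
    filter_upwards [htend.eventually_lt_const hlt, eventually_ge_atTop T₁] with t h1 h2
    exact lt_of_le_of_lt (hbound t h2) h1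
  -- Main conclusion
  intro a ha
  rw [NormedAddCommGroup.tendsto_nhds_zero]
  intro ε hε
  set β : ℝ := ε / (2 * a * (M + 1)) with hβdef
  have hβpos : 0 < β := by positivity
  obtain ⟨T₃', hT₃'⟩ := Metric.tendsto_atTop.1 hφlim β hβpos
  set T₃ : ℝ := max T₃' 0 with hT₃def
  filter_upwards [hxsmall (ε/2) (by positivity), eventually_ge_atTop T₃] with t hxt hT₃t
  have ht0 : 0 ≤ t := le_trans (le_max_right _ _) hT₃t
  have htta : t ≤ t + a := by linarith
  have hsub : Set.Icc t (t + a) ⊆ Set.Ici (0:ℝ) := fun s hs => le_trans ht0 hs.1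
  have hyIcc : IntegrableOn y (Set.Icc t (t + a)) :=
    hyloc.integrableOn_compact_subset hsub isCompact_Icc
  have hyint : IntervalIntegrable y volume t (t + a) := by
    rw [intervalIntegrable_iff_integrableOn_Icc_of_le htta]
    exact hyIcc
  have hgint : IntegrableOn (fun s => β * (M + 1) - y s) (Set.Icc t (t + a)) := by
    apply Integrable.sub _ hyIcc
    exact integrableOn_const measure_Icc_lt_top.ne
  have key := intervalIntegral.sub_le_integral_of_hasDeriv_right_of_le (g := x) (g' := x')
    (φ := fun s => β * (M + 1) - y s) htta
    (fun s hs => (hderiv s (hsub hs)).continuousAt.continuousWithinAt)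
    (fun s hs => (hderiv s (ht0.trans hs.1.le)).hasDerivWithinAt)
    hgint ?_
  · have hIcalc : ∫ s in t..(t + a), (β * (M + 1) - y s) =
        a * (β * (M + 1)) - ∫ s in t..(t + a), y s := by
      rw [intervalIntegral.integral_sub intervalIntegrable_const hyint,
        intervalIntegral.integral_const, smul_eq_mul]
      ring
    rw [hIcalc] at key
    have hInn : 0 ≤ ∫ s in t..(t + a), y s :=
      intervalIntegral.integral_nonneg htta (fun s hs => hynonneg s (hsub hs))
    rw [Real.norm_eq_abs, abs_of_nonneg hInn]
    have hxta : 0 ≤ x (t + a) := hxnonneg _ (by linarith)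
    have hβval : a * (β * (M + 1)) = ε / 2 := by
      rw [hβdef]; field_simp
    linarith
  · intro s hs
    have hs0 : 0 ≤ s := ht0.trans hs.1.le
    have h1 := hx' s hs0
    have h2 : φ s * (x s + 1) ≤ β * (M + 1) := by
      have hb : φ s ≤ β := by
        have := hT₃' s (le_trans (le_max_left _ _) (hT₃t.trans hs.1.le))
        rw [Real.dist_eq, sub_zero] at this
        exact (le_abs_self _).trans this.le
      have hx1 : x s + 1 ≤ M + 1 := by linarith [hM s hs0]
      exact mul_le_mul hb hx1 (by linarith [hxnonneg s hs0]) hβpos.le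
    show x' s ≤ β * (M + 1) - y s
    linarith
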